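/- arXiv:2401.08312 — 4 statements merged into one kernel-verified Lean document; each statement's English description precedes it below -/
import Mathlib

section
/- Let n ∈ ℕ^r be a multi-index near the diagonal and let A_1, …, A_r be real polynomials with deg A_j ≤ n_j − 1 (A_j = 0 if n_j = 0). Set F(x) = Σ_{j=1}^r A_j(x) w_j(x). Then there exists a real polynomial p of degree at most |n| − 1 such that for every real s > 1, ∫₀¹ F(x) x^{s−1} dx = (Γ(s+a)/Γ(s+b+n)) · p(s), where b+n is the componentwise sum. -/
open MeasureTheory Finset

lemma gamma_poch (x : ℝ) (hx : 0 < x) (k : ℕ) :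
    Real.Gamma (x + k) = Real.Gamma x * (ascPochhammer ℝ k).eval x := by
  induction k with
  | zero => simp
  | succ m ih =>
    have hxm : (0:ℝ) < x + m := by positivity
    have : x + (↑(m+1) : ℝ) = (x + m) + 1 := by push_cast; ring
    rw [this, Real.Gamma_add_one hxm.ne', ih, ascPochhammer_succ_right]
    simp [Polynomial.eval_mul]
    ring

/-- In the Jacobi-like setting, for a multi-index `n` near the diagonal and
polynomials `A j` with `deg A j ≤ n j - 1`, the Mellin transform of
`F(x) = ∑ j, A j (x) * w j (x)` equals `Γ(s+a)/Γ(s+b+n)` times a polynomial of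
degree at most `|n| - 1`. -/
theorem stmt_0
    (r : ℕ) (hr : 1 ≤ r)
    (a b : Fin r → ℝ)
    (ha : ∀ i, -1 < a i) (hb : ∀ i, -1 < b i) (hab : ∀ i, a i < b i)
    (w : Fin r → ℝ → ℝ)
    (hw_cont : ∀ j, ContinuousOn (w j) (Set.Ioo 0 1))
    (hw_int : ∀ j, ∀ σ : ℝ, 0 < σ →
      IntegrableOn (fun x : ℝ => x ^ (σ - 1) * |w j x|) (Set.Ioo 0 1))
    (hw_mellin : ∀ j, ∀ s : ℝ, 1 < s →
      ∫ x in Set.Ioo (0:ℝ) 1, x ^ (s - 1) * w j x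
        = (∏ i, Real.Gamma (s + a i)) /
          (∏ i, Real.Gamma (s + b i + if i = j then 1 else 0)))
    (n : Fin r → ℕ)
    (hn : ∀ i j, |(n i : ℤ) - (n j : ℤ)| ≤ 1)
    (A : Fin r → Polynomial ℝ)
    (hA : ∀ j, (A j).degree < (n j : WithBot ℕ)) :
    ∃ p : Polynomial ℝ, p.degree < ((∑ j, n j : ℕ) : WithBot ℕ) ∧
      ∀ s : ℝ, 1 < s →
        ∫ x in Set.Ioo (0:ℝ) 1, (∑ j, (A j).eval x * w j x) * x ^ (s - 1)
          = (∏ i, Real.Gamma (s + a i)) /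
            (∏ i, Real.Gamma (s + b i + n i)) * p.eval s := by
  classical
  set N := ∑ j, n j with hN
  -- natural-number indicator
  set δ : Fin r → Fin r → ℕ := fun j i => if i = j then 1 else 0 with hδ
  -- key index bound
  have hkey : ∀ j : Fin r, ∀ k : ℕ, k < n j → ∀ i : Fin r, δ j i + k ≤ n i := by
    intro j k hk i
    have h1 := (abs_le.mp (hn i j)).1
    have h2 := (abs_le.mp (hn i j)).2
    by_cases h : i = j
    · simp only [hδ, h, if_pos rfl]; subst h; omega
    · simp only [hδ, if_neg h]; omega
  -- the polynomial pieces
  set P : Fin r → ℕ → Polynomial ℝ := fun j k =>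
    (∏ i, (ascPochhammer ℝ k).comp (Polynomial.X + Polynomial.C (a i))) *
    (∏ i, (ascPochhammer ℝ (n i - (δ j i + k))).comp
        (Polynomial.X + Polynomial.C (b i + δ j i + k))) with hP
  set p : Polynomial ℝ := ∑ j, ∑ k ∈ Finset.range (n j), (A j).coeff k • P j k with hp
  have hδsum : ∀ j : Fin r, ∑ i, δ j i = 1 := by
    intro j; simp [hδ]
  -- degree bound for each P j k
  have hPdeg : ∀ j : Fin r, ∀ k : ℕ, k < n j → (P j k).natDegree ≤ N - 1 := by
    intro j k hk
    have hb1 : (∏ i, (ascPochhammer ℝ k).comp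
        (Polynomial.X + Polynomial.C (a i))).natDegree ≤ ∑ i : Fin r, k := by
      refine le_trans (Polynomial.natDegree_prod_le _ _) (Finset.sum_le_sum fun i _ => ?_)
      refine le_trans Polynomial.natDegree_comp_le ?_
      rw [ascPochhammer_natDegree, Polynomial.natDegree_X_add_C, mul_one]
    have hb2 : (∏ i, (ascPochhammer ℝ (n i - (δ j i + k))).comp
        (Polynomial.X + Polynomial.C (b i + δ j i + k))).natDegree
        ≤ ∑ i, (n i - (δ j i + k)) := by
      refine le_trans (Polynomial.natDegree_prod_le _ _) (Finset.sum_le_sum fun i _ => ?_)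
      refine le_trans Polynomial.natDegree_comp_le ?_
      rw [ascPochhammer_natDegree, Polynomial.natDegree_X_add_C, mul_one]
    have hsum : (∑ i : Fin r, k) + ∑ i, (n i - (δ j i + k)) = N - 1 := by
      have h1 : ((∑ i : Fin r, k) + ∑ i, (n i - (δ j i + k))) + ∑ i, δ j i = N := by
        rw [← Finset.sum_add_distrib, ← Finset.sum_add_distrib, hN]
        refine Finset.sum_congr rfl fun i _ => ?_
        have := hkey j k hk i
        omega
      rw [hδsum j] at h1
      omega
    calc (P j k).natDegree ≤ _ + _ := Polynomial.natDegree_mul_le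
      _ ≤ (∑ i : Fin r, k) + ∑ i, (n i - (δ j i + k)) := add_le_add hb1 hb2
      _ = N - 1 := hsum
  refine ⟨p, ?_, ?_⟩
  · -- degree of p
    refine lt_of_le_of_lt (Polynomial.degree_sum_le _ _) ?_
    rw [Finset.sup_lt_iff (by exact WithBot.bot_lt_coe N)]
    intro j _
    refine lt_of_le_of_lt (Polynomial.degree_sum_le _ _) ?_
    rw [Finset.sup_lt_iff (by exact WithBot.bot_lt_coe N)]
    intro k hk
    rw [Finset.mem_range] at hk
    calc ((A j).coeff k • P j k).degree ≤ (P j k).degree := Polynomial.degree_smul_le _ _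
      _ ≤ ((P j k).natDegree : WithBot ℕ) := Polynomial.degree_le_natDegree
      _ ≤ ((N - 1 : ℕ) : WithBot ℕ) := by exact_mod_cast hPdeg j k hk
      _ < (N : WithBot ℕ) := by
          have hle : n j ≤ N := Finset.single_le_sum (fun i _ => Nat.zero_le _) (Finset.mem_univ j)
          have : N - 1 < N := by omega
          exact_mod_cast this
  · intro s hs
    -- integrability of x ^ (σ-1) * w j x
    have hInt : ∀ j : Fin r, ∀ σ : ℝ, 0 < σ →
        IntegrableOn (fun x : ℝ => x ^ (σ - 1) * w j x) (Set.Ioo 0 1) := by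
      intro j σ hσ
      have hm : AEStronglyMeasurable (fun x : ℝ => x ^ (σ - 1) * w j x)
          (volume.restrict (Set.Ioo 0 1)) := by
        refine ContinuousOn.aestronglyMeasurable ?_ measurableSet_Ioo
        exact (ContinuousOn.rpow_const continuousOn_id
          (fun x hx => Or.inl (ne_of_gt hx.1))).mul (hw_cont j)
      refine (hw_int j σ hσ).mono' hm ?_
      filter_upwards [ae_restrict_mem measurableSet_Ioo] with x hx
      rw [Real.norm_eq_abs, abs_mul, abs_of_nonneg (Real.rpow_nonneg hx.1.le _)]
    -- pointwise expansion of the polynomial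
    have hAeval : ∀ j : Fin r, ∀ x : ℝ,
        (A j).eval x = ∑ k ∈ Finset.range (n j), (A j).coeff k * x ^ k := by
      intro j x
      by_cases h0 : A j = 0
      · simp [h0]
      · have hd : (A j).natDegree < n j := by
          exact (Polynomial.natDegree_lt_iff_degree_lt h0).mpr (by exact_mod_cast hA j)
        exact Polynomial.eval_eq_sum_range' hd x
    -- rewrite the integrand
    have hcongr : ∫ x in Set.Ioo (0:ℝ) 1, (∑ j, (A j).eval x * w j x) * x ^ (s - 1)
        = ∫ x in Set.Ioo (0:ℝ) 1, ∑ j, ∑ k ∈ Finset.range (n j),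
            (A j).coeff k * (x ^ (s + k - 1) * w j x) := by
      refine setIntegral_congr_fun measurableSet_Ioo fun x hx => ?_
      rw [Finset.sum_mul]
      refine Finset.sum_congr rfl fun j _ => ?_
      rw [hAeval j x, Finset.sum_mul, Finset.sum_mul]
      refine Finset.sum_congr rfl fun k _ => ?_
      have : x ^ (s + k - 1) = x ^ (k:ℕ) * x ^ (s - 1) := by
        rw [← Real.rpow_natCast x k, ← Real.rpow_add hx.1]
        ring_nf
      rw [this]; ring
    rw [hcongr]
    have hintg : ∀ j : Fin r, ∀ k ∈ Finset.range (n j),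
        IntegrableOn (fun x : ℝ => (A j).coeff k * (x ^ (s + k - 1) * w j x))
          (Set.Ioo 0 1) := by
      intro j k _
      have : (0:ℝ) < s + k := by
        have hk0 : (0:ℝ) ≤ (k:ℝ) := Nat.cast_nonneg k
        linarith
      have := (hInt j (s + k) this).const_mul ((A j).coeff k)
      exact this
    rw [integral_finset_sum _ (fun j _ => integrable_finset_sum _ (hintg j))]
    have hmain : ∀ j : Fin r, ∀ k ∈ Finset.range (n j),
        ∫ x in Set.Ioo (0:ℝ) 1, (A j).coeff k * (x ^ (s + k - 1) * w j x)
          = (A j).coeff k * ((∏ i, Real.Gamma (s + a i)) /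
              (∏ i, Real.Gamma (s + b i + n i)) * (P j k).eval s) := by
      intro j k hk
      rw [Finset.mem_range] at hk
      rw [MeasureTheory.integral_const_mul]
      congr 1
      have hs' : (1:ℝ) < s + k := by
        have hk0 : (0:ℝ) ≤ (k:ℝ) := Nat.cast_nonneg k
        linarith
      have hmel := hw_mellin j (s + k) hs'
      have : (fun x : ℝ => x ^ (s + k - 1) * w j x)
          = fun x : ℝ => x ^ (s + (k:ℝ) - 1) * w j x := rfl
      rw [hmel]
      -- now the Gamma algebra
      have hGa : ∀ i, Real.Gamma (s + k + a i)
          = Real.Gamma (s + a i) * (ascPochhammer ℝ k).eval (s + a i) := by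
        intro i
        have hpos : (0:ℝ) < s + a i := by have := ha i; linarith
        rw [show s + (k:ℝ) + a i = (s + a i) + k by ring, gamma_poch _ hpos k]
      have hGb : ∀ i, Real.Gamma (s + b i + n i)
          = Real.Gamma (s + k + b i + if i = j then 1 else 0)
            * (ascPochhammer ℝ (n i - (δ j i + k))).eval (s + (b i + δ j i + k)) := by
        intro i
        have hle := hkey j k hk i
        have hc : ((if i = j then (1:ℝ) else 0)) = ((δ j i : ℕ) : ℝ) := by
          simp [hδ]
        have harg : s + b i + (n i : ℝ)
            = (s + (b i + (δ j i : ℝ) + k)) + ((n i - (δ j i + k) : ℕ) : ℝ) := by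
          have : ((n i - (δ j i + k) : ℕ) : ℝ) = (n i : ℝ) - (δ j i : ℝ) - (k : ℝ) := by
            push_cast [Nat.cast_sub hle]
            ring
          rw [this]; ring
        have hpos : (0:ℝ) < s + (b i + (δ j i : ℝ) + k) := by
          have hb' := hb i
          have h1 : (0:ℝ) ≤ ((δ j i : ℕ) : ℝ) := Nat.cast_nonneg _
          have hk' : (0:ℝ) ≤ (k:ℝ) := Nat.cast_nonneg k
          linarith
        rw [harg, gamma_poch _ hpos, hc]
        ring_nf
      -- evaluate P j k
      have hPeval : (P j k).eval s
          = (∏ i, (ascPochhammer ℝ k).eval (s + a i)) *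
            (∏ i, (ascPochhammer ℝ (n i - (δ j i + k))).eval (s + (b i + δ j i + k))) := by
        simp [hP, Polynomial.eval_prod, Polynomial.eval_comp]
      set G := ∏ i, Real.Gamma (s + a i) with hG
      set D := ∏ i, Real.Gamma (s + (k:ℝ) + b i + if i = j then 1 else 0) with hD
      set PA := ∏ i, (ascPochhammer ℝ k).eval (s + a i) with hPA
      set PB := ∏ i, (ascPochhammer ℝ (n i - (δ j i + k))).eval (s + (b i + δ j i + k)) with hPB
      have hnum : (∏ i, Real.Gamma (s + k + a i)) = G * PA := by
        rw [hG, hPA, ← Finset.prod_mul_distrib]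
        exact Finset.prod_congr rfl fun i _ => hGa i
      have hden : (∏ i, Real.Gamma (s + b i + n i)) = D * PB := by
        rw [hD, hPB, ← Finset.prod_mul_distrib]
        exact Finset.prod_congr rfl fun i _ => hGb i
      have hDpos : (0:ℝ) < D := by
        refine Finset.prod_pos fun i _ => Real.Gamma_pos_of_pos ?_
        have h0 := hb i
        have hk' : (0:ℝ) ≤ (k:ℝ) := Nat.cast_nonneg k
        have h1 : (0:ℝ) ≤ (if i = j then (1:ℝ) else 0) := by split <;> norm_num
        linarith
      have hPBpos : (0:ℝ) < PB := by
        refine Finset.prod_pos fun i _ => ascPochhammer_pos _ _ ?_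
        have h0 := hb i
        have h1 : (0:ℝ) ≤ ((δ j i : ℕ) : ℝ) := Nat.cast_nonneg _
        have hk' : (0:ℝ) ≤ (k:ℝ) := Nat.cast_nonneg k
        linarith
      rw [hnum, hden, hPeval]
      field_simp
    calc ∑ j, ∫ x in Set.Ioo (0:ℝ) 1, ∑ k ∈ Finset.range (n j),
            (A j).coeff k * (x ^ (s + k - 1) * w j x)
        = ∑ j, ∑ k ∈ Finset.range (n j),
            ∫ x in Set.Ioo (0:ℝ) 1, (A j).coeff k * (x ^ (s + k - 1) * w j x) := by
          refine Finset.sum_congr rfl fun j _ => ?_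
          exact integral_finset_sum _ (hintg j)
      _ = ∑ j, ∑ k ∈ Finset.range (n j), (A j).coeff k *
            ((∏ i, Real.Gamma (s + a i)) / (∏ i, Real.Gamma (s + b i + n i))
              * (P j k).eval s) := by
          exact Finset.sum_congr rfl fun j _ => Finset.sum_congr rfl fun k hk => hmain j k hk
      _ = (∏ i, Real.Gamma (s + a i)) / (∏ i, Real.Gamma (s + b i + n i)) * p.eval s := by
          rw [hp]
          simp only [Polynomial.eval_finset_sum, Polynomial.eval_smul, smul_eq_mul,
            Finset.mul_sum]
          refine Finset.sum_congr rfl fun j _ => Finset.sum_congr rfl fun k _ => ?_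
          ring
end

section
/- Let r ≥ 1 and a, b ∈ (−1,∞)^r with the components of b pairwise distinct, and fix J ∈ {1,…,r}. Define c_j = ∏_{i=1}^r (a_i − b_j) / ∏_{i≠j} (b_i − b_j) for j ≠ J, and c_J = ∏_{i=1}^r (a_i − b_J) / ∏_{i≠J} (b_i − b_J) + b_J. Then for every real s > 1, Σ_{j=1}^r (c_j + s·δ_{j,J}) · Γ(s+a)/Γ(s+b+e_j) = (s + b_J + 1) · Γ(s+1+a)/Γ(s+1+b+e_J), where δ is the Kronecker delta. (This is the key identity underlying the matrix Pearson equation for the Jacobi-like system of weights.) -/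
open Finset
open Polynomial

lemma poly_key (r : ℕ) (a b : Fin r → ℝ) (hbdist : Function.Injective b) :
    ∑ j, C ((∏ i, (a i - b j)) / (∏ i ∈ Finset.univ.erase j, (b i - b j))) *
        ∏ i ∈ Finset.univ.erase j, (X + C (b i))
      = (∏ i, (X + C (a i))) - ∏ i, (X + C (b i)) := by
  rcases Nat.eq_zero_or_pos r with hr | hr
  · subst hr; simp
  have hPmonic : (∏ i, (X + C (a i)) : ℝ[X]).Monic :=
    monic_prod_of_monic _ _ fun i _ => monic_X_add_C _
  have hQmonic : (∏ i, (X + C (b i)) : ℝ[X]).Monic :=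
    monic_prod_of_monic _ _ fun i _ => monic_X_add_C _
  have hPdeg : (∏ i, (X + C (a i)) : ℝ[X]).degree = r := by
    rw [degree_prod]; simp [degree_X_add_C]
  have hQdeg : (∏ i, (X + C (b i)) : ℝ[X]).degree = r := by
    rw [degree_prod]; simp [degree_X_add_C]
  apply Polynomial.eq_of_degrees_lt_of_eval_index_eq (v := fun j => -b j) Finset.univ
    (fun x _ y _ hxy => hbdist (by simpa using neg_injective hxy))
  · apply lt_of_le_of_lt (Polynomial.degree_sum_le _ _)
    apply Finset.sup_lt_iff (bot_lt_iff_ne_bot.mpr (by simp)) |>.mpr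
    intro j _
    apply lt_of_le_of_lt (degree_mul_le _ _)
    have h1 : (C ((∏ i, (a i - b j)) / (∏ i ∈ Finset.univ.erase j, (b i - b j))) : ℝ[X]).degree ≤ 0 := degree_C_le
    have h2 : (∏ i ∈ Finset.univ.erase j, (X + C (b i)) : ℝ[X]).degree ≤ (r - 1 : ℕ) := by
      apply le_trans (degree_prod_le _ _)
      simp only [degree_X_add_C]
      rw [Finset.sum_const, card_erase_of_mem (mem_univ j), card_univ, Fintype.card_fin]
      simp
    calc _ ≤ (0 : WithBot ℕ) + (r - 1 : ℕ) := add_le_add h1 h2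
    _ < (Finset.univ : Finset (Fin r)).card := by
        simp only [zero_add, card_univ, Fintype.card_fin]
        exact_mod_cast Nat.sub_lt hr one_pos
  · have := degree_sub_lt (hPdeg.trans hQdeg.symm) hPmonic.ne_zero
      (by rw [hPmonic.leadingCoeff, hQmonic.leadingCoeff])
    rw [hPdeg] at this
    simpa using this
  · intro k _
    simp only [eval_sub, eval_prod, eval_add, eval_X, eval_C, eval_mul, eval_finset_sum]
    have hzero : ∏ i, (-b k + b i) = 0 :=
      Finset.prod_eq_zero (mem_univ k) (by ring)
    rw [hzero, sub_zero]
    rw [Finset.sum_eq_single k]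
    · have hne : (∏ i ∈ Finset.univ.erase k, (b i - b k)) ≠ 0 := by
        apply Finset.prod_ne_zero_iff.mpr
        intro i hi
        exact sub_ne_zero.mpr (fun h => (Finset.mem_erase.mp hi).1 (hbdist h))
      rw [show (∏ i ∈ Finset.univ.erase k, (-b k + b i)) = ∏ i ∈ Finset.univ.erase k, (b i - b k) by
        apply Finset.prod_congr rfl; intros; ring]
      rw [div_mul_cancel₀ _ hne]
      apply Finset.prod_congr rfl; intros; ring
    · intro j _ hjk
      apply mul_eq_zero_of_right
      exact Finset.prod_eq_zero (Finset.mem_erase.mpr ⟨Ne.symm hjk, mem_univ k⟩) (by ring)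
    · simp

lemma rat_key (r : ℕ) (a b : Fin r → ℝ) (hbdist : Function.Injective b)
    (s : ℝ) (hs : ∀ i, s + b i ≠ 0) :
    ∑ j, ((∏ i, (a i - b j)) / (∏ i ∈ Finset.univ.erase j, (b i - b j))) / (s + b j)
      = (∏ i, (s + a i)) / (∏ i, (s + b i)) - 1 := by
  have hQ : (∏ i, (s + b i)) ≠ 0 := Finset.prod_ne_zero_iff.mpr fun i _ => hs i
  have hpoly := congrArg (Polynomial.eval s) (poly_key r a b hbdist)
  simp only [Polynomial.eval_sub, Polynomial.eval_finset_sum, Polynomial.eval_mul,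
    Polynomial.eval_prod, Polynomial.eval_add, Polynomial.eval_X, Polynomial.eval_C] at hpoly
  have hterm : ∀ j, ((∏ i, (a i - b j)) / (∏ i ∈ Finset.univ.erase j, (b i - b j))) / (s + b j)
      = ((∏ i, (a i - b j)) / (∏ i ∈ Finset.univ.erase j, (b i - b j))
          * ∏ i ∈ Finset.univ.erase j, (s + b i)) / ∏ i, (s + b i) := by
    intro j
    rw [← Finset.mul_prod_erase Finset.univ (fun i => s + b i) (Finset.mem_univ j)]
    have hp : (∏ i ∈ Finset.univ.erase j, (s + b i)) ≠ 0 :=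
      Finset.prod_ne_zero_iff.mpr fun i _ => hs i
    rw [mul_div_mul_right _ _ hp]
  simp only [hterm]
  rw [← Finset.sum_div, hpoly, sub_div, div_self hQ]

/-- The key Gamma-function identity underlying the matrix Pearson equation
for the Jacobi-like system of weights. -/
theorem stmt_1
    (r : ℕ) (hr : 1 ≤ r)
    (a b : Fin r → ℝ)
    (ha : ∀ i, -1 < a i) (hb : ∀ i, -1 < b i)
    (hbdist : Function.Injective b)
    (J : Fin r)
    (c : Fin r → ℝ)
    (hc : ∀ j, c j =
      (∏ i, (a i - b j)) / (∏ i ∈ Finset.univ.erase j, (b i - b j))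
        + if j = J then b J else 0) :
    ∀ s : ℝ, 1 < s →
      ∑ j, (c j + s * (if j = J then 1 else 0)) *
          ((∏ i, Real.Gamma (s + a i)) /
           (∏ i, Real.Gamma (s + b i + if i = j then 1 else 0)))
        = (s + b J + 1) *
          ((∏ i, Real.Gamma (s + 1 + a i)) /
           (∏ i, Real.Gamma (s + 1 + b i + if i = J then 1 else 0))) := by
  intro s hs1
  have hsb : ∀ i, 0 < s + b i := fun i => by linarith [hb i]
  have hsa : ∀ i, 0 < s + a i := fun i => by linarith [ha i]
  have hHpos : 0 < ∏ i, Real.Gamma (s + b i) :=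
    Finset.prod_pos fun i _ => Real.Gamma_pos_of_pos (hsb i)
  have hGpos : 0 < ∏ i, Real.Gamma (s + a i) :=
    Finset.prod_pos fun i _ => Real.Gamma_pos_of_pos (hsa i)
  have hBpos : (0:ℝ) < ∏ i, (s + b i) := Finset.prod_pos fun i _ => hsb i
  have hden : ∀ j, (∏ i, Real.Gamma (s + b i + if i = j then 1 else 0))
      = (s + b j) * ∏ i, Real.Gamma (s + b i) := by
    intro j
    have h1 : (∏ i ∈ Finset.univ.erase j, Real.Gamma (s + b i + if i = j then 1 else 0))
        = ∏ i ∈ Finset.univ.erase j, Real.Gamma (s + b i) :=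
      Finset.prod_congr rfl fun i hi => by rw [if_neg (Finset.mem_erase.mp hi).1, add_zero]
    rw [← Finset.mul_prod_erase Finset.univ _ (Finset.mem_univ j), h1,
      ← Finset.mul_prod_erase Finset.univ (fun i => Real.Gamma (s + b i)) (Finset.mem_univ j),
      if_pos rfl, Real.Gamma_add_one (ne_of_gt (hsb j))]
    ring
  have hnum : (∏ i, Real.Gamma (s + 1 + a i)) = (∏ i, (s + a i)) * ∏ i, Real.Gamma (s + a i) := by
    rw [← Finset.prod_mul_distrib]
    exact Finset.prod_congr rfl fun i _ => by
      rw [show s + 1 + a i = (s + a i) + 1 by ring, Real.Gamma_add_one (ne_of_gt (hsa i))]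
  have hdenR : (∏ i, Real.Gamma (s + 1 + b i + if i = J then 1 else 0))
      = (s + b J + 1) * ((∏ i, (s + b i)) * ∏ i, Real.Gamma (s + b i)) := by
    have h1 : (∏ i ∈ Finset.univ.erase J, Real.Gamma (s + 1 + b i + if i = J then 1 else 0))
        = ∏ i ∈ Finset.univ.erase J, ((s + b i) * Real.Gamma (s + b i)) :=
      Finset.prod_congr rfl fun i hi => by
        rw [if_neg (Finset.mem_erase.mp hi).1, add_zero,
          show s + 1 + b i = (s + b i) + 1 by ring, Real.Gamma_add_one (ne_of_gt (hsb i))]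
    rw [← Finset.mul_prod_erase Finset.univ _ (Finset.mem_univ J), h1,
      ← Finset.mul_prod_erase Finset.univ (fun i => s + b i) (Finset.mem_univ J),
      ← Finset.mul_prod_erase Finset.univ (fun i => Real.Gamma (s + b i)) (Finset.mem_univ J),
      Finset.prod_mul_distrib, if_pos rfl,
      show s + 1 + b J + 1 = (s + b J + 1) + 1 by ring,
      Real.Gamma_add_one (by have := hsb J; intro h; linarith),
      show s + b J + 1 = (s + b J) + 1 by ring,
      Real.Gamma_add_one (ne_of_gt (hsb J))]
    ring
  have key : ∑ j, (c j + s * (if j = J then 1 else 0)) / (s + b j)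
      = (∏ i, (s + a i)) / (∏ i, (s + b i)) := by
    have split : ∀ j ∈ Finset.univ, (c j + s * (if j = J then 1 else 0)) / (s + b j)
        = ((∏ i, (a i - b j)) / (∏ i ∈ Finset.univ.erase j, (b i - b j))) / (s + b j)
          + (if j = J then (s + b J) / (s + b j) else 0) := by
      intro j _
      rw [hc j]
      by_cases h : j = J
      · simp only [h, eq_self_iff_true, if_true]; ring
      · simp only [if_neg h]; ring
    rw [Finset.sum_congr rfl split, Finset.sum_add_distrib,
      rat_key r a b hbdist s (fun i => ne_of_gt (hsb i)),
      Finset.sum_ite_eq' Finset.univ J (fun j => (s + b J) / (s + b j))]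
    simp [div_self (ne_of_gt (hsb J))]
  have step : ∀ j ∈ Finset.univ, (c j + s * (if j = J then 1 else 0)) *
        ((∏ i, Real.Gamma (s + a i)) / ((s + b j) * ∏ i, Real.Gamma (s + b i)))
      = ((c j + s * (if j = J then 1 else 0)) / (s + b j)) *
        ((∏ i, Real.Gamma (s + a i)) / ∏ i, Real.Gamma (s + b i)) := by
    intro j _
    have h1 : s + b j ≠ 0 := ne_of_gt (hsb j)
    have h2 : (∏ i, Real.Gamma (s + b i)) ≠ 0 := ne_of_gt hHpos
    field_simp
  simp only [hden, hnum, hdenR]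
  rw [Finset.sum_congr rfl step, ← Finset.sum_mul, key]
  have h1 : s + b J + 1 ≠ 0 := by have := hsb J; intro h; linarith
  have h2 : (∏ i, Real.Gamma (s + b i)) ≠ 0 := ne_of_gt hHpos
  have h3 : (∏ i, (s + b i)) ≠ 0 := ne_of_gt hBpos
  field_simp
end

section
/- Let n ∈ ℕ^q and m ∈ ℕ^{p−q} be such that the concatenation n⊔m = (n_1,…,n_q,m_1,…,m_{p−q}) ∈ ℕ^p is near the diagonal and m is on the step-line. Let A_1, …, A_q and B_1, …, B_{p−q} be real polynomials with deg A_j ≤ n_j − 1 and deg B_j ≤ m_j − 1, and set F(x) = Σ_{j=1}^q A_j(x) w_j(x) + Σ_{j=1}^{p−q} B_j(x) v_j(x). Then there exists a real polynomial p̃ of degree at most |n| + |m| − 1 such that for every real s > 1, ∫₀^∞ F(x) x^{s−1} dx = (Γ(s+a)/Γ(s+b+n)) · p̃(s). -/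
open MeasureTheory Finset
open Polynomial

noncomputable def poch9 (c : ℝ) (k : ℕ) : Polynomial ℝ :=
  (ascPochhammer ℝ k).comp (Polynomial.X + Polynomial.C c)

lemma poch9_eval (c : ℝ) (k : ℕ) (s : ℝ) :
    (poch9 c k).eval s = (ascPochhammer ℝ k).eval (s + c) := by
  simp [poch9, eval_comp]

lemma poch9_natDegree_le (c : ℝ) (k : ℕ) : (poch9 c k).natDegree ≤ k := by
  refine (natDegree_comp_le).trans ?_
  rw [ascPochhammer_natDegree]
  have : (Polynomial.X + Polynomial.C c : Polynomial ℝ).natDegree ≤ 1 := by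
    apply natDegree_add_le_of_degree_le <;> simp
  nlinarith [this]

lemma asc_eval_pos (k : ℕ) {x : ℝ} (hx : 0 < x) : 0 < (ascPochhammer ℝ k).eval x := by
  induction k with
  | zero => simp
  | succ k ih =>
    rw [ascPochhammer_succ_right]
    simp only [eval_mul, eval_add, eval_X, eval_natCast]
    positivity

lemma Gamma_add_nat9 {x : ℝ} (hx : 0 < x) (k : ℕ) :
    Real.Gamma (x + k) = Real.Gamma x * (ascPochhammer ℝ k).eval x := by
  induction k with
  | zero => simp
  | succ k ih =>
    have hxk : (0:ℝ) < x + k := by positivity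
    have : x + (k+1 : ℕ) = (x + k) + 1 := by push_cast; ring
    rw [this, Real.Gamma_add_one hxk.ne', ih, ascPochhammer_succ_right]
    simp only [eval_mul, eval_add, eval_X, eval_natCast]
    ring

lemma mellin_integrable9 (f : ℝ → ℝ) (hc : ContinuousOn f (Set.Ioi 0))
    (hi : ∀ σ : ℝ, 0 < σ → IntegrableOn (fun x : ℝ => x ^ (σ - 1) * |f x|) (Set.Ioi 0))
    (σ : ℝ) (hσ : 0 < σ) :
    IntegrableOn (fun x : ℝ => x ^ (σ - 1) * f x) (Set.Ioi 0) := by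
  have hmeas : AEStronglyMeasurable (fun x : ℝ => x ^ (σ - 1) * f x)
      (volume.restrict (Set.Ioi 0)) := by
    refine ContinuousOn.aestronglyMeasurable ?_ measurableSet_Ioi
    exact (continuousOn_id.rpow_const (fun x hx => Or.inl (ne_of_gt hx))).mul hc
  refine ((hi σ hσ)).mono' hmeas ?_
  filter_upwards [ae_restrict_mem measurableSet_Ioi] with x hx
  rw [norm_mul, Real.norm_eq_abs, Real.norm_eq_abs,
    abs_of_nonneg (Real.rpow_nonneg (le_of_lt hx) _)]

lemma mellin_pow_integrable9 (f : ℝ → ℝ) (hc : ContinuousOn f (Set.Ioi 0))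
    (hi : ∀ σ : ℝ, 0 < σ → IntegrableOn (fun x : ℝ => x ^ (σ - 1) * |f x|) (Set.Ioi 0))
    (s : ℝ) (hs : 1 < s) (k : ℕ) (c : ℝ) :
    IntegrableOn (fun x : ℝ => c * (x ^ k * f x * x ^ (s - 1))) (Set.Ioi 0) := by
  have h1 : IntegrableOn (fun x : ℝ => x ^ (s + k - 1) * f x) (Set.Ioi 0) :=
    mellin_integrable9 f hc hi (s + k) (by positivity)
  refine ((h1.congr_fun ?_ measurableSet_Ioi).const_mul c)
  intro x hx
  have hx0 : (0:ℝ) < x := hx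
  simp only []
  rw [show s + k - 1 = (k : ℝ) + (s - 1) by ring, Real.rpow_add hx0,
    Real.rpow_natCast]
  ring

lemma mellin_pow_integral9 (f : ℝ → ℝ) (hc : ContinuousOn f (Set.Ioi 0))
    (hi : ∀ σ : ℝ, 0 < σ → IntegrableOn (fun x : ℝ => x ^ (σ - 1) * |f x|) (Set.Ioi 0))
    (s : ℝ) (hs : 1 < s) (k : ℕ) (c : ℝ) :
    ∫ x in Set.Ioi (0:ℝ), c * (x ^ k * f x * x ^ (s - 1))
      = c * ∫ x in Set.Ioi (0:ℝ), x ^ (s + k - 1) * f x := by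
  rw [MeasureTheory.integral_const_mul]
  congr 1
  refine setIntegral_congr_fun measurableSet_Ioi (fun x hx => ?_)
  have hx0 : (0:ℝ) < x := hx
  rw [show s + k - 1 = (k : ℝ) + (s - 1) by ring, Real.rpow_add hx0,
    Real.rpow_natCast]
  ring

lemma eval_eq_sum_range9 (P : Polynomial ℝ) (N : ℕ) (h : P.degree < (N : WithBot ℕ)) (x : ℝ) :
    P.eval x = ∑ k ∈ Finset.range N, P.coeff k * x ^ k := by
  rcases eq_or_ne P 0 with rfl | h0
  · simp
  · exact P.eval_eq_sum_range' ((natDegree_lt_iff_degree_lt h0).mpr h) x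

lemma mellin_poly9 (f : ℝ → ℝ) (hc : ContinuousOn f (Set.Ioi 0))
    (hi : ∀ σ : ℝ, 0 < σ → IntegrableOn (fun x : ℝ => x ^ (σ - 1) * |f x|) (Set.Ioi 0))
    (P : Polynomial ℝ) (N : ℕ) (hP : P.degree < (N : WithBot ℕ)) (s : ℝ) (hs : 1 < s) :
    IntegrableOn (fun x : ℝ => P.eval x * f x * x ^ (s - 1)) (Set.Ioi 0) ∧
    ∫ x in Set.Ioi (0:ℝ), P.eval x * f x * x ^ (s - 1)
      = ∑ k ∈ Finset.range N, P.coeff k * ∫ x in Set.Ioi (0:ℝ), x ^ (s + k - 1) * f x := by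
  have hfun : (fun x : ℝ => P.eval x * f x * x ^ (s - 1))
      = fun x : ℝ => ∑ k ∈ Finset.range N, P.coeff k * (x ^ k * f x * x ^ (s - 1)) := by
    funext x
    rw [eval_eq_sum_range9 P N hP, Finset.sum_mul, Finset.sum_mul]
    exact Finset.sum_congr rfl (fun k _ => by ring)
  rw [hfun]
  have hint : ∀ k ∈ Finset.range N,
      IntegrableOn (fun x : ℝ => P.coeff k * (x ^ k * f x * x ^ (s - 1))) (Set.Ioi 0) :=
    fun k _ => mellin_pow_integrable9 f hc hi s hs k _
  constructor
  · exact MeasureTheory.integrable_finset_sum _ hint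
  · rw [MeasureTheory.integral_finset_sum _ hint]
    exact Finset.sum_congr rfl (fun k _ => mellin_pow_integral9 f hc hi s hs k _)

lemma gamma_ratio9 {p q : ℕ} (a : Fin p → ℝ) (b : Fin q → ℝ) (ha : ∀ l, -1 < a l)
    (hb : ∀ l, -1 < b l) (n d : Fin q → ℕ) (k : ℕ) (hd : ∀ l, d l + k ≤ n l)
    (s : ℝ) (hs : 1 < s) :
    (∏ l, Real.Gamma ((s + k) + a l)) / (∏ l, Real.Gamma ((s + k) + b l + d l)) =
      (∏ l, Real.Gamma (s + a l)) / (∏ l, Real.Gamma (s + b l + n l)) *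
        ((∏ l, (ascPochhammer ℝ k).eval (s + a l)) *
         ∏ l, (ascPochhammer ℝ (n l - d l - k)).eval (s + b l + d l + k)) := by
  have hsa : ∀ l, (0:ℝ) < s + a l := fun l => by have := ha l; linarith
  have hsb : ∀ l : Fin q, (0:ℝ) < s + b l + d l + k := fun l => by
    have h1 : (0:ℝ) ≤ (d l : ℝ) := Nat.cast_nonneg _
    have h2 : (0:ℝ) ≤ (k : ℝ) := Nat.cast_nonneg _
    have h3 := hb l
    linarith
  have hnum : (∏ l, Real.Gamma ((s + k) + a l))
      = (∏ l, Real.Gamma (s + a l)) * ∏ l, (ascPochhammer ℝ k).eval (s + a l) := by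
    rw [← Finset.prod_mul_distrib]
    refine Finset.prod_congr rfl (fun l _ => ?_)
    rw [show (s + k) + a l = (s + a l) + k by ring]
    exact Gamma_add_nat9 (hsa l) k
  have hden : (∏ l, Real.Gamma (s + b l + n l))
      = (∏ l, Real.Gamma ((s + k) + b l + d l)) *
        ∏ l, (ascPochhammer ℝ (n l - d l - k)).eval (s + b l + d l + k) := by
    rw [← Finset.prod_mul_distrib]
    refine Finset.prod_congr rfl (fun l _ => ?_)
    have hcast : (n l : ℝ) = (d l : ℝ) + k + ((n l - d l - k : ℕ) : ℝ) := by
      have h := hd l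
      rw [Nat.cast_sub (by omega : k ≤ n l - d l), Nat.cast_sub (by omega : d l ≤ n l)]
      ring
    rw [show s + b l + (n l : ℝ) = (s + b l + d l + k) + ((n l - d l - k : ℕ) : ℝ) by
      rw [hcast]; ring]
    rw [Gamma_add_nat9 (hsb l) _]
    congr 2
    ring
  have hDpos : (0:ℝ) < ∏ l, Real.Gamma ((s + k) + b l + d l) := by
    apply Finset.prod_pos
    intro l _
    apply Real.Gamma_pos_of_pos
    have := hsb l; rw [show (s + k) + b l + (d l : ℝ) = s + b l + d l + k by ring]; exact this
  have hP2pos : (0:ℝ) < ∏ l, (ascPochhammer ℝ (n l - d l - k)).eval (s + b l + d l + k) :=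
    Finset.prod_pos (fun l _ => asc_eval_pos _ (hsb l))
  rw [hnum, hden]
  rw [div_mul_eq_mul_div, div_eq_div_iff hDpos.ne' (mul_pos hDpos hP2pos).ne']
  ring


/-- In the Laguerre-like setting, for a multi-index `n ⊔ m` near the diagonal
with `m` on the step-line, the Mellin transform of a polynomial combination
`F(x) = ∑ j, A j (x) w j (x) + ∑ j, B j (x) v j (x)` equals `Γ(s+a)/Γ(s+b+n)` times a
polynomial of degree at most `|n| + |m| - 1`. -/
theorem stmt_9
    (p q : ℕ) (hpq : q < p)
    (a : Fin p → ℝ) (b : Fin q → ℝ)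
    (ha : ∀ i, -1 < a i) (hb : ∀ i, -1 < b i)
    (hab : ∀ j : Fin q, a (Fin.castLE hpq.le j) < b j)
    (w : Fin q → ℝ → ℝ) (v : Fin (p - q) → ℝ → ℝ)
    (hw_cont : ∀ j, ContinuousOn (w j) (Set.Ioi 0))
    (hv_cont : ∀ i, ContinuousOn (v i) (Set.Ioi 0))
    (hw_int : ∀ j, ∀ σ : ℝ, 0 < σ →
      IntegrableOn (fun x : ℝ => x ^ (σ - 1) * |w j x|) (Set.Ioi 0))
    (hv_int : ∀ i, ∀ σ : ℝ, 0 < σ →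
      IntegrableOn (fun x : ℝ => x ^ (σ - 1) * |v i x|) (Set.Ioi 0))
    (hw_mellin : ∀ j, ∀ s : ℝ, 1 < s →
      ∫ x in Set.Ioi (0:ℝ), x ^ (s - 1) * w j x
        = (∏ i, Real.Gamma (s + a i)) /
          (∏ i, Real.Gamma (s + b i + if i = j then 1 else 0)))
    (hv_mellin : ∀ i, ∀ s : ℝ, 1 < s →
      ∫ x in Set.Ioi (0:ℝ), x ^ (s - 1) * v i x
        = (∏ i', Real.Gamma (s + a i')) / (∏ i', Real.Gamma (s + b i')) *
            (s - 1) ^ (i : ℕ))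
    (n : Fin q → ℕ) (m : Fin (p - q) → ℕ)
    (hnd1 : ∀ i j, |(n i : ℤ) - (n j : ℤ)| ≤ 1)
    (hnd2 : ∀ i j, |(m i : ℤ) - (m j : ℤ)| ≤ 1)
    (hnd3 : ∀ i j, |(n i : ℤ) - (m j : ℤ)| ≤ 1)
    (hmstep : ∀ i j : Fin (p - q), i ≤ j → m j ≤ m i ∧ m i ≤ m j + 1)
    (A : Fin q → Polynomial ℝ) (B : Fin (p - q) → Polynomial ℝ)
    (hA : ∀ j, (A j).degree < (n j : WithBot ℕ))
    (hB : ∀ j, (B j).degree < (m j : WithBot ℕ)) :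
    ∃ P : Polynomial ℝ, P.degree < ((∑ j, n j + ∑ j, m j : ℕ) : WithBot ℕ) ∧
      ∀ s : ℝ, 1 < s →
        ∫ x in Set.Ioi (0:ℝ),
            (∑ j, (A j).eval x * w j x + ∑ j, (B j).eval x * v j x) * x ^ (s - 1)
          = (∏ i, Real.Gamma (s + a i)) / (∏ i, Real.Gamma (s + b i + n i)) *
              P.eval s := by
  classical
  set N := ∑ j, n j + ∑ j, m j with hN
  -- diagonal facts
  have hfact1 : ∀ (j l : Fin q) (k : ℕ), k < n j → (if l = j then 1 else 0) + k ≤ n l := by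
    intro j l k hk
    have h1 := abs_le.mp (hnd1 j l)
    by_cases h : l = j
    · subst h; simp; omega
    · simp [h]; omega
  have hfact2 : ∀ (i : Fin (p - q)) (l : Fin q) (k : ℕ), k < m i → k ≤ n l := by
    intro i l k hk
    have h1 := abs_le.mp (hnd3 l i)
    omega
  -- the polynomials
  set Qw : Fin q → ℕ → Polynomial ℝ := fun j k =>
    (∏ l, poch9 (a l) k) *
      ∏ l : Fin q, poch9 (b l + ((if l = j then 1 else 0 : ℕ) : ℝ) + (k : ℝ))
        (n l - (if l = j then 1 else 0) - k) with hQw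
  set Qv : Fin (p - q) → ℕ → Polynomial ℝ := fun i k =>
    (∏ l, poch9 (a l) k) * (∏ l : Fin q, poch9 (b l + (k : ℝ)) (n l - k)) *
      (Polynomial.X + Polynomial.C ((k : ℝ) - 1)) ^ (i : ℕ) with hQv
  refine ⟨(∑ j, ∑ k ∈ Finset.range (n j), Polynomial.C ((A j).coeff k) * Qw j k)
      + ∑ i, ∑ k ∈ Finset.range (m i), Polynomial.C ((B i).coeff k) * Qv i k, ?_, ?_⟩
  · -- degree bound
    have key : ∀ T : Polynomial ℝ, T.natDegree < N → T.degree < (N : WithBot ℕ) := by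
      intro T h
      exact lt_of_le_of_lt T.degree_le_natDegree (by exact_mod_cast h)
    have hprodA : ∀ k : ℕ, (∏ l : Fin p, poch9 (a l) k).natDegree ≤ p * k := by
      intro k
      calc (∏ l : Fin p, poch9 (a l) k).natDegree ≤ ∑ l : Fin p, (poch9 (a l) k).natDegree :=
            natDegree_prod_le _ _
        _ ≤ ∑ _l : Fin p, k := Finset.sum_le_sum fun l _ => poch9_natDegree_le _ _
        _ = p * k := by simp [Finset.sum_const, mul_comm]
    refine lt_of_le_of_lt (degree_add_le _ _) (max_lt ?_ ?_)
    · refine lt_of_le_of_lt (degree_sum_le _ _) ((Finset.sup_lt_iff (WithBot.bot_lt_coe N)).mpr ?_)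
      intro j _
      refine lt_of_le_of_lt (degree_sum_le _ _) ((Finset.sup_lt_iff (WithBot.bot_lt_coe N)).mpr ?_)
      intro k hk
      have hkj : k < n j := Finset.mem_range.mp hk
      refine key _ ?_
      have h0 : (Polynomial.C ((A j).coeff k) * Qw j k).natDegree ≤ (Qw j k).natDegree :=
        natDegree_C_mul_le _ _
      have h2 : (∏ l : Fin q, poch9 (b l + ((if l = j then 1 else 0 : ℕ) : ℝ) + (k : ℝ))
            (n l - (if l = j then 1 else 0) - k)).natDegree
          ≤ ∑ l : Fin q, (n l - (if l = j then 1 else 0) - k) := by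
        calc _ ≤ ∑ l : Fin q, (poch9 (b l + ((if l = j then 1 else 0 : ℕ) : ℝ) + (k : ℝ))
              (n l - (if l = j then 1 else 0) - k)).natDegree := natDegree_prod_le _ _
          _ ≤ _ := Finset.sum_le_sum fun l _ => poch9_natDegree_le _ _
      have h1 : (Qw j k).natDegree ≤ p * k + ∑ l : Fin q, (n l - (if l = j then 1 else 0) - k) := by
        rw [hQw]
        exact le_trans (natDegree_mul_le) (add_le_add (hprodA k) h2)
      have hA1 : ∑ l : Fin q, (n l - (if l = j then 1 else 0) - k)
          + ∑ l : Fin q, ((if l = j then 1 else 0) + k) = ∑ l, n l := by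
        rw [← Finset.sum_add_distrib]
        refine Finset.sum_congr rfl fun l _ => ?_
        have := hfact1 j l k hkj
        omega
      have hA2 : ∑ l : Fin q, ((if l = j then 1 else 0 : ℕ) + k) = 1 + q * k := by
        rw [Finset.sum_add_distrib]
        simp [Finset.sum_ite_eq', Finset.sum_const, mul_comm]
      have hA3 : (p - q) * k ≤ ∑ i, m i := by
        have : ∀ i : Fin (p - q), k ≤ m i := by
          intro i
          have h1 := abs_le.mp (hnd3 j i)
          omega
        calc (p - q) * k = ∑ _i : Fin (p - q), k := by simp [Finset.sum_const, mul_comm]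
          _ ≤ ∑ i, m i := Finset.sum_le_sum fun i _ => this i
      have hA4 : p * k = q * k + (p - q) * k := by
        rw [← Nat.add_mul]
        congr 1
        omega
      rw [hA2] at hA1
      have := le_trans h0 h1
      rw [hN]
      linarith
    · refine lt_of_le_of_lt (degree_sum_le _ _) ((Finset.sup_lt_iff (WithBot.bot_lt_coe N)).mpr ?_)
      intro i _
      refine lt_of_le_of_lt (degree_sum_le _ _) ((Finset.sup_lt_iff (WithBot.bot_lt_coe N)).mpr ?_)
      intro k hk
      have hki : k < m i := Finset.mem_range.mp hk
      refine key _ ?_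
      have h0 : (Polynomial.C ((B i).coeff k) * Qv i k).natDegree ≤ (Qv i k).natDegree :=
        natDegree_C_mul_le _ _
      have h2 : (∏ l : Fin q, poch9 (b l + (k : ℝ)) (n l - k)).natDegree
          ≤ ∑ l : Fin q, (n l - k) := by
        calc _ ≤ ∑ l : Fin q, (poch9 (b l + (k : ℝ)) (n l - k)).natDegree :=
              natDegree_prod_le _ _
          _ ≤ _ := Finset.sum_le_sum fun l _ => poch9_natDegree_le _ _
      have h3 : ((Polynomial.X + Polynomial.C ((k : ℝ) - 1)) ^ (i : ℕ)).natDegree ≤ (i : ℕ) := by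
        refine le_trans natDegree_pow_le ?_
        have : (Polynomial.X + Polynomial.C ((k : ℝ) - 1)).natDegree ≤ 1 :=
          natDegree_add_le_of_degree_le natDegree_X_le
            (le_trans (natDegree_C _).le (by norm_num))
        nlinarith [this]
      have h1 : (Qv i k).natDegree ≤ p * k + ∑ l : Fin q, (n l - k) + (i : ℕ) := by
        rw [hQv]
        refine le_trans natDegree_mul_le (add_le_add (le_trans natDegree_mul_le
          (add_le_add (hprodA k) h2)) h3)
      have hB1 : ∑ l : Fin q, (n l - k) + q * k = ∑ l, n l := by
        have : ∑ l : Fin q, (n l - k) + ∑ _l : Fin q, k = ∑ l, n l := by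
          rw [← Finset.sum_add_distrib]
          refine Finset.sum_congr rfl fun l _ => ?_
          have := hfact2 i l k hki
          omega
        simpa [Finset.sum_const, mul_comm] using this
      -- step-line estimate
      have hB2 : (p - q) * k + ((i : ℕ) + 1) ≤ ∑ l, m l := by
        have hstep : ∀ l : Fin (p - q), (m i - 1) + (if l ≤ i then 1 else 0) ≤ m l := by
          intro l
          by_cases h : l ≤ i
          · have := (hmstep l i h).1
            simp [h]; omega
          · have hil : i ≤ l := le_of_not_ge h
            have := (hmstep i l hil).2
            simp [h]; omega
        have hsum : ∑ l : Fin (p - q), ((m i - 1) + (if l ≤ i then 1 else 0)) ≤ ∑ l, m l :=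
          Finset.sum_le_sum fun l _ => hstep l
        have hcard : ∑ l : Fin (p - q), (if l ≤ i then 1 else 0) = (i : ℕ) + 1 := by
          have hfil : Finset.univ.filter (fun l : Fin (p - q) => l ≤ i) = Finset.Iic i := by
            ext l; simp
          rw [← Finset.sum_filter, hfil, Finset.sum_const, smul_eq_mul, mul_one, Fin.card_Iic]
        rw [Finset.sum_add_distrib, hcard, Finset.sum_const] at hsum
        simp only [smul_eq_mul, Finset.card_univ, Fintype.card_fin, mul_comm] at hsum
        have hmono : (p - q) * k ≤ (p - q) * (m i - 1) := Nat.mul_le_mul_left _ (by omega)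
        -- hsum : (p - q) * (m i - 1) + ((i:ℕ)+1) ≤ ∑ l, m l  (modulo mul_comm)
        omega
      have hA4 : p * k = q * k + (p - q) * k := by
        rw [← Nat.add_mul]
        congr 1
        omega
      have := le_trans h0 h1
      rw [hN]
      linarith
  · -- evaluation
    intro s hs
    have hwInt : ∀ j, IntegrableOn (fun x : ℝ => (A j).eval x * w j x * x ^ (s - 1)) (Set.Ioi 0) :=
      fun j => (mellin_poly9 (w j) (hw_cont j) (hw_int j) (A j) (n j) (hA j) s hs).1
    have hvInt : ∀ i, IntegrableOn (fun x : ℝ => (B i).eval x * v i x * x ^ (s - 1)) (Set.Ioi 0) :=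
      fun i => (mellin_poly9 (v i) (hv_cont i) (hv_int i) (B i) (m i) (hB i) s hs).1
    simp only [add_mul, Finset.sum_mul]
    rw [MeasureTheory.integral_add (MeasureTheory.integrable_finset_sum _ fun j _ => hwInt j)
        (MeasureTheory.integrable_finset_sum _ fun i _ => hvInt i),
      MeasureTheory.integral_finset_sum _ fun j _ => hwInt j,
      MeasureTheory.integral_finset_sum _ fun i _ => hvInt i]
    have hwEval : ∀ j : Fin q, ∫ x in Set.Ioi (0:ℝ), (A j).eval x * w j x * x ^ (s - 1)
        = (∏ i, Real.Gamma (s + a i)) / (∏ i, Real.Gamma (s + b i + n i)) *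
          ∑ k ∈ Finset.range (n j), (A j).coeff k * (Qw j k).eval s := by
      intro j
      rw [(mellin_poly9 (w j) (hw_cont j) (hw_int j) (A j) (n j) (hA j) s hs).2, Finset.mul_sum]
      refine Finset.sum_congr rfl fun k hk => ?_
      have hkj : k < n j := Finset.mem_range.mp hk
      have hks : (1:ℝ) < s + k := by
        have h0 : (0:ℝ) ≤ k := Nat.cast_nonneg k
        linarith
      rw [hw_mellin j (s + k) hks]
      have hmel := gamma_ratio9 a b ha hb n (fun l => if l = j then 1 else 0) k
        (fun l => hfact1 j l k hkj) s hs
      simp only [Nat.cast_ite, Nat.cast_one, Nat.cast_zero] at hmel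
      rw [hmel]
      rw [hQw]
      simp only [eval_mul, eval_prod, poch9_eval, Nat.cast_ite, Nat.cast_one, Nat.cast_zero]
      have hargs : (∏ l : Fin q, (ascPochhammer ℝ (n l - (if l = j then 1 else 0) - k)).eval
            (s + (b l + (if l = j then (1:ℝ) else 0) + (k : ℝ))))
          = ∏ l : Fin q, (ascPochhammer ℝ (n l - (if l = j then 1 else 0) - k)).eval
            (s + b l + (if l = j then (1:ℝ) else 0) + (k : ℝ)) :=
        Finset.prod_congr rfl fun l _ => by ring_nf
      rw [hargs]
      ring
    have hvEval : ∀ i : Fin (p - q), ∫ x in Set.Ioi (0:ℝ), (B i).eval x * v i x * x ^ (s - 1)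
        = (∏ i', Real.Gamma (s + a i')) / (∏ i', Real.Gamma (s + b i' + n i')) *
          ∑ k ∈ Finset.range (m i), (B i).coeff k * (Qv i k).eval s := by
      intro i
      rw [(mellin_poly9 (v i) (hv_cont i) (hv_int i) (B i) (m i) (hB i) s hs).2, Finset.mul_sum]
      refine Finset.sum_congr rfl fun k hk => ?_
      have hki : k < m i := Finset.mem_range.mp hk
      have hks : (1:ℝ) < s + k := by
        have h0 : (0:ℝ) ≤ k := Nat.cast_nonneg k
        linarith
      rw [hv_mellin i (s + k) hks]
      have hmel := gamma_ratio9 a b ha hb n (fun _ => 0) k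
        (fun l => by simpa using hfact2 i l k hki) s hs
      simp only [Nat.cast_zero, add_zero, Nat.sub_zero] at hmel
      rw [hmel]
      rw [hQv]
      simp only [eval_mul, eval_prod, eval_pow, eval_add, eval_X, eval_C, poch9_eval]
      have hargs : (∏ l : Fin q, (ascPochhammer ℝ (n l - k)).eval (s + (b l + (k : ℝ))))
          = ∏ l : Fin q, (ascPochhammer ℝ (n l - k)).eval (s + b l + (k : ℝ)) :=
        Finset.prod_congr rfl fun l _ => by ring_nf
      rw [hargs]
      ring
    simp only [hwEval, hvEval, eval_add, eval_finset_sum, eval_mul, eval_C]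
    rw [← Finset.mul_sum, ← Finset.mul_sum, ← mul_add]
end

section
/- Let 0 ≤ p < q, a ∈ (−1,∞)^p, b ∈ (−1,∞)^q, and fix w ∈ ℝ. For each integer n ≥ 1 define H_n(w) = Σ_{k=0}^∞ [(qn)_k · ∏_{i=1}^p (a_i+qn)_k / (∏_{i=1}^q (b_i+(q+1)n)_k · k!)] w^k (an everywhere-convergent series since p+1 ≤ q). Then, as n → ∞: if p = q − 1, H_n(w) → exp((q^q/(q+1)^q) · w); and if p < q − 1, H_n(w) → 1. -/
open Finset Filter

private lemma asc_prod (k : ℕ) (x : ℝ) :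
    (ascPochhammer ℝ k).eval x = ∏ j ∈ range k, (x + j) := by
  induction k with
  | zero => simp
  | succ k ih => rw [ascPochhammer_succ_eval, ih, prod_range_succ]

private lemma natinv_tendsto : Tendsto (fun n : ℕ => ((n : ℝ))⁻¹) atTop (nhds 0) :=
  tendsto_inv_atTop_zero.comp tendsto_natCast_atTop_atTop

private lemma lin_div_lin (α β γ δ : ℝ) (hδ : δ ≠ 0) :
    Tendsto (fun n : ℕ => (α + β * n) / (γ + δ * n)) atTop (nhds (β / δ)) := by
  have h1 : Tendsto (fun n : ℕ => α * (n : ℝ)⁻¹ + β) atTop (nhds β) := by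
    simpa using (natinv_tendsto.const_mul α).add (tendsto_const_nhds (x := β))
  have h2 : Tendsto (fun n : ℕ => γ * (n : ℝ)⁻¹ + δ) atTop (nhds δ) := by
    simpa using (natinv_tendsto.const_mul γ).add (tendsto_const_nhds (x := δ))
  refine Tendsto.congr' ?_ (h1.div h2 hδ)
  filter_upwards [eventually_ge_atTop 1] with n hn
  have hn' : (n : ℝ) ≠ 0 := by
    have : (1 : ℝ) ≤ n := by exact_mod_cast hn
    linarith
  simp only [Pi.div_apply]
  rw [show α + β * (n : ℝ) = (α * (n : ℝ)⁻¹ + β) * n by field_simp,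
      show γ + δ * (n : ℝ) = (γ * (n : ℝ)⁻¹ + δ) * n by field_simp,
      mul_div_mul_right _ _ hn']

set_option maxHeartbeats 4000000 in
/-- Confluent limit of the `_{p+1}F_q`-hypergeometric factor in the error of
the Hermite–Padé approximation: as `n → ∞`, `H_n(w) → exp((q^q/(q+1)^q)·w)` if `p = q-1`,
and `H_n(w) → 1` if `p < q-1`. -/
theorem stmt_19
    (p q : ℕ) (hpq : p < q)
    (a : Fin p → ℝ) (b : Fin q → ℝ)
    (ha : ∀ i, -1 < a i) (hb : ∀ i, -1 < b i)
    (w : ℝ)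
    (H : ℕ → ℝ)
    (hH : ∀ n : ℕ, H n = ∑' k : ℕ,
      (ascPochhammer ℝ k).eval ((q * n : ℕ) : ℝ) *
        (∏ i, (ascPochhammer ℝ k).eval (a i + q * n)) /
        ((∏ i, (ascPochhammer ℝ k).eval (b i + (q + 1) * n)) * k.factorial) * w ^ k) :
    (p = q - 1 →
      Tendsto H atTop (nhds (Real.exp ((q : ℝ) ^ q / ((q : ℝ) + 1) ^ q * w)))) ∧
    (p + 1 < q → Tendsto H atTop (nhds 1)) := by
  have hq0 : 0 < q := (Nat.zero_le p).trans_lt hpq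
  have hQ1 : (1 : ℝ) ≤ (q : ℝ) := by exact_mod_cast hq0
  -- the summand
  set F : ℕ → ℕ → ℝ := fun n k =>
      (ascPochhammer ℝ k).eval ((q * n : ℕ) : ℝ) *
        (∏ i, (ascPochhammer ℝ k).eval (a i + q * n)) /
        ((∏ i, (ascPochhammer ℝ k).eval (b i + (q + 1) * n)) * k.factorial) * w ^ k
    with hF
  have hHeq : H = fun n => ∑' k, F n k := funext hH
  -- numerator and denominator
  set P : ℕ → ℕ → ℝ := fun n k =>
      (ascPochhammer ℝ k).eval ((q * n : ℕ) : ℝ) *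
        ∏ i, (ascPochhammer ℝ k).eval (a i + q * n) with hPdef
  set D : ℕ → ℕ → ℝ := fun n k =>
      ∏ i, (ascPochhammer ℝ k).eval (b i + (q + 1) * n) with hDdef
  have hFPD : ∀ n k, F n k = P n k / D n k * (w ^ k / k.factorial) := by
    intro n k
    simp only [hF, hPdef, hDdef]
    ring
  have hP : ∀ n k, P n k
      = ∏ j ∈ range k, (((q : ℝ) * n + j) * ∏ i, (a i + q * n + j)) := by
    intro n k
    simp only [hPdef, asc_prod]
    rw [Finset.prod_comm, ← prod_mul_distrib]
    push_cast
    rfl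
  have hD : ∀ n k, D n k = ∏ j ∈ range k, ∏ i, (b i + ((q : ℝ) + 1) * n + j) := by
    intro n k
    simp only [hDdef, asc_prod]
    rw [Finset.prod_comm]
  -- the comparison sequence
  set E : ℕ → ℕ → ℝ := fun n j => ((q : ℝ) + 1) * n - 1 + j with hEdef
  have hE1 : ∀ n : ℕ, 1 ≤ n → ∀ j : ℕ, (1 : ℝ) ≤ E n j := by
    intro n hn j
    have hn' : (1 : ℝ) ≤ n := by exact_mod_cast hn
    have hj : (0 : ℝ) ≤ j := Nat.cast_nonneg j
    simp only [hEdef]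
    nlinarith
  have hEb : ∀ n : ℕ, ∀ i, ∀ j : ℕ, E n j ≤ b i + ((q : ℝ) + 1) * n + j := by
    intro n i j
    have := hb i
    simp only [hEdef]
    linarith
  have hDpos : ∀ n : ℕ, 1 ≤ n → ∀ k, 0 < D n k := by
    intro n hn k
    rw [hD]
    apply prod_pos
    intro j _
    apply prod_pos
    intro i _
    have h1 := hE1 n hn j
    have h2 := hEb n i j
    linarith
  have hPnn : ∀ n : ℕ, 1 ≤ n → ∀ k, 0 ≤ P n k := by
    intro n hn k
    have hn' : (1 : ℝ) ≤ n := by exact_mod_cast hn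
    rw [hP]
    apply prod_nonneg
    intro j _
    have hj : (0 : ℝ) ≤ j := Nat.cast_nonneg j
    have hQn : (1 : ℝ) ≤ (q : ℝ) * n := by nlinarith
    apply mul_nonneg (by nlinarith)
    apply prod_nonneg
    intro i _
    have := ha i
    linarith
  -- a uniform bound on the `a i`
  set A : ℝ := 1 + ∑ i, |a i| with hAdef
  have hA1 : 1 ≤ A := by
    have : 0 ≤ ∑ i, |a i| := sum_nonneg fun i _ => abs_nonneg _
    simp only [hAdef]; linarith
  have hAa : ∀ i, a i ≤ A := by
    intro i
    have h1 : a i ≤ |a i| := le_abs_self _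
    have h2 : |a i| ≤ ∑ j, |a j| := Finset.single_le_sum (f := fun j => |a j|) (fun j _ => abs_nonneg _) (mem_univ i)
    simp only [hAdef]; linarith
  obtain ⟨N₀, hN₀⟩ := exists_nat_ge (A + 1)
  set N : ℕ := max N₀ 1 with hNdef
  have hN1 : 1 ≤ N := le_max_right _ _
  have hNA : A + 1 ≤ (N : ℝ) := by
    refine hN₀.trans ?_
    exact_mod_cast Nat.le_max_left N₀ 1
  -- the key comparison: P ≤ ∏ E^(p+1) ≤ ∏ E^q ≤ D
  have hPE : ∀ n : ℕ, N ≤ n → ∀ k, P n k ≤ ∏ j ∈ range k, E n j ^ (p + 1) := by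
    intro n hn k
    have hn1 : 1 ≤ n := hN1.trans hn
    have hn' : (1 : ℝ) ≤ n := by exact_mod_cast hn1
    have hnA : A + 1 ≤ (n : ℝ) := by
      refine hNA.trans ?_; exact_mod_cast hn
    rw [hP]
    apply Finset.prod_le_prod
    · intro j _
      have hj : (0 : ℝ) ≤ j := Nat.cast_nonneg j
      have hQn : (1 : ℝ) ≤ (q : ℝ) * n := by nlinarith
      apply mul_nonneg (by nlinarith)
      apply prod_nonneg
      intro i _
      have := ha i
      linarith
    · intro j _
      have hj : (0 : ℝ) ≤ j := Nat.cast_nonneg j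
      have hE0 : (0 : ℝ) ≤ E n j := le_trans zero_le_one (hE1 n hn1 j)
      have h1 : (q : ℝ) * n + j ≤ E n j := by
        simp only [hEdef]; nlinarith
      have h2 : ∏ i, (a i + (q : ℝ) * n + j) ≤ E n j ^ p := by
        have : ∏ (_ : Fin p), E n j = E n j ^ p := by
          simp [prod_const]
        rw [← this]
        apply Finset.prod_le_prod
        · intro i _
          have := ha i
          have hQn : (1 : ℝ) ≤ (q : ℝ) * n := by nlinarith
          linarith
        · intro i _
          have hai := hAa i
          simp only [hEdef]
          nlinarith
      calc ((q : ℝ) * n + j) * ∏ i, (a i + q * n + j)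
          ≤ E n j * E n j ^ p := by
            apply mul_le_mul h1 h2 ?_ hE0
            apply prod_nonneg
            intro i _
            have := ha i
            have hQn : (1 : ℝ) ≤ (q : ℝ) * n := by nlinarith
            linarith
        _ = E n j ^ (p + 1) := by ring
  have hED : ∀ n : ℕ, 1 ≤ n → ∀ k, ∏ j ∈ range k, E n j ^ q ≤ D n k := by
    intro n hn k
    rw [hD]
    apply Finset.prod_le_prod
    · intro j _
      exact pow_nonneg (le_trans zero_le_one (hE1 n hn j)) _
    · intro j _
      have : ∏ (_ : Fin q), E n j = E n j ^ q := by simp [prod_const]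
      rw [← this]
      apply Finset.prod_le_prod
      · intro i _
        exact le_trans zero_le_one (hE1 n hn j)
      · intro i _
        exact hEb n i j
  have hPD : ∀ n : ℕ, N ≤ n → ∀ k, P n k ≤ D n k := by
    intro n hn k
    have hn1 : 1 ≤ n := hN1.trans hn
    refine (hPE n hn k).trans (le_trans ?_ (hED n hn1 k))
    apply Finset.prod_le_prod
    · intro j _; exact pow_nonneg (le_trans zero_le_one (hE1 n hn1 j)) _
    · intro j _
      exact pow_le_pow_right₀ (hE1 n hn1 j) (by omega)
  have hdom : ∀ n : ℕ, N ≤ n → ∀ k, |F n k| ≤ |w| ^ k / k.factorial := by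
    intro n hn k
    have hn1 : 1 ≤ n := hN1.trans hn
    have hDp := hDpos n hn1 k
    have hPn := hPnn n hn1 k
    rw [hFPD, abs_mul, abs_div, abs_of_nonneg hPn, abs_of_pos hDp, abs_div,
      abs_pow, Nat.abs_cast]
    have h1 : P n k / D n k ≤ 1 := (div_le_one hDp).mpr (hPD n hn k)
    have h2 : (0 : ℝ) ≤ |w| ^ k / k.factorial := by positivity
    calc P n k / D n k * (|w| ^ k / k.factorial)
        ≤ 1 * (|w| ^ k / k.factorial) := by
          apply mul_le_mul_of_nonneg_right h1 h2
      _ = |w| ^ k / k.factorial := one_mul _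
  constructor
  · -- case p = q - 1
    intro hp
    have hq : q = p + 1 := by omega
    subst hq
    rw [hHeq]
    set cc : ℝ := ((p + 1 : ℕ) : ℝ) / (((p + 1 : ℕ) : ℝ) + 1) with hccdef
    have hexp : Real.exp (((p + 1 : ℕ) : ℝ) ^ (p + 1) / (((p + 1 : ℕ) : ℝ) + 1) ^ (p + 1) * w)
        = ∑' k : ℕ, (cc ^ (p + 1) * w) ^ k / (k.factorial : ℝ) := by
      rw [show ((p + 1 : ℕ) : ℝ) ^ (p + 1) / (((p + 1 : ℕ) : ℝ) + 1) ^ (p + 1)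
            = cc ^ (p + 1) by rw [hccdef, div_pow],
        Real.exp_eq_exp_ℝ, NormedSpace.exp_eq_tsum_div]
    rw [hexp]
    apply tendsto_tsum_of_dominated_convergence
      (bound := fun k => |w| ^ k / k.factorial)
      (Real.summable_pow_div_factorial |w|)
    · -- pointwise limits
      intro k
      have hcc1 : (((p + 1 : ℕ) : ℝ) + 1) ≠ 0 := by positivity
      -- the factored form of P/D
      have hsplit : ∀ n, P n k / D n k
          = ∏ j ∈ range k,
              ((((p + 1 : ℕ) : ℝ) * n + j) * ∏ i, (a i + ((p + 1 : ℕ) : ℝ) * n + j))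
                / ∏ i, (b i + (((p + 1 : ℕ) : ℝ) + 1) * n + j) := by
        intro n
        rw [hP n k, hD n k, ← prod_div_distrib]
      have rlim : ∀ j : ℕ, Tendsto (fun n : ℕ =>
          ((((p + 1 : ℕ) : ℝ) * n + j) * ∏ i, (a i + ((p + 1 : ℕ) : ℝ) * n + j))
            / ∏ i, (b i + (((p + 1 : ℕ) : ℝ) + 1) * n + j)) atTop (nhds (cc ^ (p + 1))) := by
        intro j
        have r1 : Tendsto (fun n : ℕ =>
            (((p + 1 : ℕ) : ℝ) * n + j) / (b 0 + (((p + 1 : ℕ) : ℝ) + 1) * n + j))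
            atTop (nhds cc) := by
          have := lin_div_lin (j : ℝ) ((p + 1 : ℕ) : ℝ) (b 0 + j) (((p + 1 : ℕ) : ℝ) + 1) hcc1
          exact this.congr (fun n => by ring_nf)
        have r2 : ∀ i : Fin p, Tendsto (fun n : ℕ =>
            (a i + ((p + 1 : ℕ) : ℝ) * n + j) / (b i.succ + (((p + 1 : ℕ) : ℝ) + 1) * n + j))
            atTop (nhds cc) := by
          intro i
          have := lin_div_lin (a i + j) ((p + 1 : ℕ) : ℝ) (b i.succ + j)
            (((p + 1 : ℕ) : ℝ) + 1) hcc1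
          exact this.congr (fun n => by ring_nf)
        have rprod : Tendsto (fun n : ℕ =>
            ∏ i : Fin p, (a i + ((p + 1 : ℕ) : ℝ) * n + j)
              / (b i.succ + (((p + 1 : ℕ) : ℝ) + 1) * n + j)) atTop (nhds (cc ^ p)) := by
          have := tendsto_finset_prod (univ : Finset (Fin p)) (fun i _ => r2 i)
          simpa [prod_const] using this
        have hmul := r1.mul rprod
        rw [show cc * cc ^ p = cc ^ (p + 1) by ring] at hmul
        refine hmul.congr fun n => ?_
        rw [Fin.prod_univ_succ (fun i : Fin (p + 1) =>
          (b i + (((p + 1 : ℕ) : ℝ) + 1) * n + j)), mul_div_mul_comm, prod_div_distrib]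
      have hPDlim : Tendsto (fun n => P n k / D n k) atTop (nhds ((cc ^ (p + 1)) ^ k)) := by
        have := tendsto_finset_prod (range k) (fun j (_ : j ∈ range k) => rlim j)
        rw [prod_const, card_range] at this
        exact this.congr fun n => (hsplit n).symm
      have := hPDlim.mul_const (w ^ k / (k.factorial : ℝ))
      rw [show (cc ^ (p + 1)) ^ k * (w ^ k / (k.factorial : ℝ))
          = (cc ^ (p + 1) * w) ^ k / (k.factorial : ℝ) by rw [mul_pow]; ring] at this
      exact this.congr fun n => (hFPD n k).symm
    · filter_upwards [eventually_ge_atTop N] with n hn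
      intro k
      rw [Real.norm_eq_abs]
      exact hdom n hn k
  · -- case p + 1 < q
    intro hq2
    rw [hHeq, show (1 : ℝ) = ∑' k : ℕ, (if k = 0 then (1 : ℝ) else 0) from (tsum_ite_eq 0 1).symm]
    apply tendsto_tsum_of_dominated_convergence
      (bound := fun k => |w| ^ k / k.factorial)
      (Real.summable_pow_div_factorial |w|)
    · intro k
      rcases Nat.eq_zero_or_pos k with hk | hk
      · subst hk
        have hone : ∀ n, F n 0 = 1 := by
          intro n
          simp [hF]
        simp only [if_pos rfl]
        simpa [hone] using tendsto_const_nhds (x := (1 : ℝ)) (f := atTop (α := ℕ))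
      · have hk0 : k ≠ 0 := by omega
        simp only [if_neg hk0]
        -- |F n k| ≤ (|w|^k / k!) * n⁻¹ for n ≥ N
        have key : ∀ n : ℕ, N ≤ n → |F n k| ≤ |w| ^ k / k.factorial * (n : ℝ)⁻¹ := by
          intro n hn
          have hn1 : 1 ≤ n := hN1.trans hn
          have hn' : (1 : ℝ) ≤ n := by exact_mod_cast hn1
          have hnpos : (0 : ℝ) < n := by linarith
          have hDp := hDpos n hn1 k
          -- P n k * n ≤ D n k
          have step1 : (n : ℝ) ≤ ∏ j ∈ range k, E n j := by
            obtain ⟨m, rfl⟩ : ∃ m, k = m + 1 := ⟨k - 1, by omega⟩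
            rw [prod_range_succ']
            have h1 : (1 : ℝ) ≤ ∏ j ∈ range m, E n (j + 1) := by
              have := Finset.prod_le_prod (s := range m) (f := fun _ => (1 : ℝ))
                (g := fun j => E n (j + 1)) (fun j _ => zero_le_one)
                (fun j _ => hE1 n hn1 (j + 1))
              simpa using this
            have h2 : (n : ℝ) ≤ E n 0 := by
              simp only [hEdef]
              have hq' : (1 : ℝ) ≤ (q : ℝ) := hQ1
              push_cast
              nlinarith
            nlinarith
          have step2 : P n k * n ≤ D n k := by
            have c1 : P n k * n ≤ (∏ j ∈ range k, E n j ^ (p + 1)) * ∏ j ∈ range k, E n j := by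
              apply mul_le_mul (hPE n hn k) step1 (le_of_lt hnpos)
              exact Finset.prod_nonneg fun j _ => pow_nonneg (le_trans zero_le_one (hE1 n hn1 j)) _
            have c2 : (∏ j ∈ range k, E n j ^ (p + 1)) * ∏ j ∈ range k, E n j
                = ∏ j ∈ range k, E n j ^ (p + 2) := by
              rw [← prod_mul_distrib]
              apply prod_congr rfl
              intro j _
              ring
            have c3 : ∏ j ∈ range k, E n j ^ (p + 2) ≤ ∏ j ∈ range k, E n j ^ q := by
              apply Finset.prod_le_prod
              · intro j _; exact pow_nonneg (le_trans zero_le_one (hE1 n hn1 j)) _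
              · intro j _
                exact pow_le_pow_right₀ (hE1 n hn1 j) (by omega)
            calc P n k * n ≤ ∏ j ∈ range k, E n j ^ (p + 2) := by rw [← c2]; exact c1
              _ ≤ ∏ j ∈ range k, E n j ^ q := c3
              _ ≤ D n k := hED n hn1 k
          have hPn := hPnn n hn1 k
          have hfrac : P n k / D n k ≤ (n : ℝ)⁻¹ := by
            rw [inv_eq_one_div]
            rw [div_le_div_iff₀ hDp hnpos]
            linarith [step2]
          rw [hFPD, abs_mul, abs_div, abs_of_nonneg hPn, abs_of_pos hDp, abs_div,
            abs_pow, Nat.abs_cast]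
          have h2 : (0 : ℝ) ≤ |w| ^ k / k.factorial := by positivity
          calc P n k / D n k * (|w| ^ k / k.factorial)
              ≤ (n : ℝ)⁻¹ * (|w| ^ k / k.factorial) :=
                mul_le_mul_of_nonneg_right hfrac h2
            _ = |w| ^ k / k.factorial * (n : ℝ)⁻¹ := by ring
        rw [tendsto_zero_iff_abs_tendsto_zero]
        apply squeeze_zero' (g := fun n : ℕ => |w| ^ k / k.factorial * (n : ℝ)⁻¹)
        · exact Eventually.of_forall fun n => abs_nonneg _
        · filter_upwards [eventually_ge_atTop N] with n hn
          simpa using key n hn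
        · simpa using natinv_tendsto.const_mul (|w| ^ k / (k.factorial : ℝ))
    · filter_upwards [eventually_ge_atTop N] with n hn
      intro k
      rw [Real.norm_eq_abs]
      exact hdom n hn k
end
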